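/- (Proposition 1, ADMM fixed-point reformulation) Define v^k = x^{k+1} + μ^k, where (x^{k+1}, η^{k+1}) solves [[Q+ρI, Aᵀ],[A,0]](x^{k+1}, η^{k+1}) = (-(p - ρ(z^k - μ^k)), b), z^{k+1} = Π(v^k), and μ^{k+1} = v^k - Π(v^k). Then the ADMM iterations satisfy (v^{k+1}, η^{k+2}) = -M^{-1}(p - ρ(2Π(v^k) - v^k), -b) + (v^k, η^{k+1}) - (Π(v^k), η^{k+1}), where M = [[Q+ρI, Aᵀ],[A,0]]; that is, ADMM is a fixed-point iteration in the variable (v, η). -/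

import Mathlib

open Matrix

lemma aux_transpose_ker {n m : ℕ} (A : Matrix (Fin m) (Fin n) ℝ) (hA : A.rank = m)
    (y : Fin m → ℝ) (hy : Aᵀ *ᵥ y = 0) : y = 0 := by
  have hrk : Aᵀ.rank = m := by rw [A.rank_transpose]; exact hA
  have h1 := LinearMap.finrank_range_add_finrank_ker (Aᵀ.mulVecLin)
  rw [Matrix.rank] at hrk
  have hdim : Module.finrank ℝ (Fin m → ℝ) = m := by simp
  rw [hrk, hdim] at h1
  have hker : Module.finrank ℝ (LinearMap.ker Aᵀ.mulVecLin) = 0 := by omega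
  have : LinearMap.ker Aᵀ.mulVecLin = ⊥ := Submodule.finrank_eq_zero.mp hker
  have hy' : y ∈ LinearMap.ker Aᵀ.mulVecLin := by
    rw [LinearMap.mem_ker, Matrix.mulVecLin_apply]; exact hy
  rw [this] at hy'
  simpa using hy'

/-- Proposition 1: with `v^k = x^{k+1} + μ^k`, the scaled ADMM iterations for the
box-constrained QP can be cast as the fixed-point iteration
`(v^{k+1}, η^{k+2}) = -M⁻¹(p - ρ(2Π(v^k) - v^k), -b) + (v^k, η^{k+1}) - (Π(v^k), η^{k+1})`
with `M = [[Q + ρI, Aᵀ],[A, 0]]`. -/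
theorem admm_fixed_point_reformulation (n m : ℕ) (Q : Matrix (Fin n) (Fin n) ℝ)
    (A : Matrix (Fin m) (Fin n) ℝ) (hQ : Q.PosDef) (hA : A.rank = m)
    (p l u : Fin n → ℝ) (b : Fin m → ℝ) (hlu : ∀ j, l j ≤ u j) (ρ : ℝ) (hρ : 0 < ρ)
    (proj : (Fin n → ℝ) → Fin n → ℝ)
    (hproj : ∀ x j, proj x j = max (l j) (min (x j) (u j)))
    (M : Matrix (Fin n ⊕ Fin m) (Fin n ⊕ Fin m) ℝ)
    (hM : M = Matrix.fromBlocks (Q + ρ • 1) Aᵀ A 0)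
    (z₀ μ₀ x₁ x₂ : Fin n → ℝ) (η₁ η₂ : Fin m → ℝ)
    (h₁ : M *ᵥ Sum.elim x₁ η₁ = Sum.elim (-(p - ρ • (z₀ - μ₀))) b)
    (v₀ : Fin n → ℝ) (hv₀ : v₀ = x₁ + μ₀)
    (z₁ : Fin n → ℝ) (hz₁ : z₁ = proj v₀)
    (μ₁ : Fin n → ℝ) (hμ₁ : μ₁ = v₀ - proj v₀)
    (h₂ : M *ᵥ Sum.elim x₂ η₂ = Sum.elim (-(p - ρ • (z₁ - μ₁))) b)
    (v₁ : Fin n → ℝ) (hv₁ : v₁ = x₂ + μ₁) :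
    Sum.elim v₁ η₂ =
      -(M⁻¹ *ᵥ Sum.elim (p - ρ • ((2 : ℝ) • proj v₀ - v₀)) (-b))
        + Sum.elim v₀ η₁ - Sum.elim (proj v₀) η₁ := by
  -- Step 1: M is invertible.
  have hMunit : IsUnit M := by
    rw [← Matrix.mulVec_injective_iff_isUnit]
    have hker : ∀ w, M *ᵥ w = 0 → w = 0 := by
      intro w hw
      set x : Fin n → ℝ := w ∘ Sum.inl with hx
      set y : Fin m → ℝ := w ∘ Sum.inr with hy
      have hw' : w = Sum.elim x y := by
        funext i; cases i <;> rfl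
      rw [hw', hM, Matrix.fromBlocks_mulVec] at hw
      have e1 : (Q + ρ • 1) *ᵥ x + Aᵀ *ᵥ y = 0 := by
        funext i; exact congrFun hw (Sum.inl i)
      have e2 : A *ᵥ x = 0 := by
        have := fun i => congrFun hw (Sum.inr i)
        funext i; simpa using this i
      -- x ⬝ ((Q+ρI)x) = 0
      have key : x ⬝ᵥ ((Q + ρ • 1) *ᵥ x) = 0 := by
        have : x ⬝ᵥ ((Q + ρ • 1) *ᵥ x + Aᵀ *ᵥ y) = 0 := by rw [e1]; simp
        rw [dotProduct_add] at this
        have hAy : x ⬝ᵥ (Aᵀ *ᵥ y) = 0 := by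
          rw [Matrix.dotProduct_mulVec, Matrix.vecMul_transpose, e2]
          simp
        linarith [this, hAy]
      have hx0 : x = 0 := by
        by_contra hx0
        have hQpos : 0 < x ⬝ᵥ (Q *ᵥ x) := by
          have := hQ.dotProduct_mulVec_pos hx0
          simpa using this
        have hxx : 0 ≤ x ⬝ᵥ x := Finset.sum_nonneg fun i _ => mul_self_nonneg (x i)
        have hexp : x ⬝ᵥ ((Q + ρ • 1) *ᵥ x) = x ⬝ᵥ (Q *ᵥ x) + ρ * (x ⬝ᵥ x) := by
          rw [Matrix.add_mulVec, dotProduct_add, Matrix.smul_mulVec,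
            Matrix.one_mulVec, dotProduct_smul]
          simp [smul_eq_mul]
        rw [hexp] at key
        nlinarith
      rw [hx0] at e1
      simp at e1
      have hy0 : y = 0 := aux_transpose_ker A hA y e1
      rw [hw', hx0, hy0]
      simp
    intro a b hab
    have : M *ᵥ (a - b) = 0 := by
      rw [Matrix.mulVec_sub, hab, sub_self]
    have := hker _ this
    exact sub_eq_zero.mp this
  -- Step 2: identify the right-hand sides.
  have hrhs : Sum.elim (-(p - ρ • (z₁ - μ₁))) b =
      -(Sum.elim (p - ρ • ((2 : ℝ) • proj v₀ - v₀)) (-b)) := by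
    have hz : z₁ - μ₁ = (2 : ℝ) • proj v₀ - v₀ := by
      rw [hz₁, hμ₁]; funext j; simp [two_smul]; ring
    funext i; cases i with
    | inl i => simp [hz]
    | inr i => simp
  -- Step 3: solve for (x₂, η₂).
  have hsol : Sum.elim x₂ η₂ =
      -(M⁻¹ *ᵥ Sum.elim (p - ρ • ((2 : ℝ) • proj v₀ - v₀)) (-b)) := by
    rw [← Matrix.mulVec_neg, ← hrhs, ← h₂, Matrix.mulVec_mulVec,
      Matrix.nonsing_inv_mul M (by simpa using hMunit.map Matrix.detMonoidHom)]
    simp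
  -- Step 4: conclude.
  funext i; cases i with
  | inl i =>
    have := congrFun hsol (Sum.inl i)
    simp only [Sum.elim_inl] at this ⊢
    simp only [Pi.add_apply, Pi.sub_apply, Pi.neg_apply, Sum.elim_inl]
    have hv : v₁ i = x₂ i + μ₁ i := by rw [hv₁]; rfl
    have hmu : μ₁ i = v₀ i - proj v₀ i := by rw [hμ₁]; rfl
    simp only [Pi.neg_apply] at this
    rw [hv, hmu, this]
    ring
  | inr i =>
    have := congrFun hsol (Sum.inr i)
    simp only [Sum.elim_inr] at this ⊢
    simp only [Pi.add_apply, Pi.sub_apply, Pi.neg_apply, Sum.elim_inr]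
    simp only [Pi.neg_apply] at this
    rw [this]
    ring
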